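/- Let 1 ≤ ℓ < k and n ≥ k be integers. Let F be a k-uniform hypergraph with at least one edge such that every (ℓ+1)-element vertex set is contained in at most one edge of F, and such that every ℓ-element vertex set contained in some edge of F is contained in at least n edges of F. Then F contains a copy of every k-uniform ℓ-tree on at most n vertices. -/

import Mathlib

/-- A `k`-uniform hypergraph on a finite vertex set of naturals:
each edge is a `k`-element subset of the vertex set. -/
structure KHypergraph (k : ℕ) where
  verts : Finset ℕ
  edges : Finset (Finset ℕ)
  card_eq : ∀ e ∈ edges, e.card = k
  subset_verts : ∀ e ∈ edges, e ⊆ verts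

namespace KHypergraph

/-- `H.IsCopy G f` : the injection `f` embeds `G` into `H` as a subhypergraph. -/
def IsCopy {k : ℕ} (H G : KHypergraph k) (f : ℕ → ℕ) : Prop :=
  Set.InjOn f ↑G.verts ∧ Set.MapsTo f ↑G.verts ↑H.verts ∧
    ∀ e ∈ G.edges, e.image f ∈ H.edges

/-- `H.Arrows G` : every 2-coloring of the edges of `H` yields a monochromatic copy of `G`. -/
def Arrows {k : ℕ} (H G : KHypergraph k) : Prop :=
  ∀ χ : Finset ℕ → Bool, ∃ (f : ℕ → ℕ) (c : Bool),
    H.IsCopy G f ∧ ∀ e ∈ G.edges, χ (e.image f) = c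

/-- The size-Ramsey number `R̂(G)`: the least number of edges of a hypergraph `H` with `H → G`. -/
noncomputable def sizeRamsey {k : ℕ} (G : KHypergraph k) : ℕ :=
  sInf { m | ∃ H : KHypergraph k, H.Arrows G ∧ H.edges.card = m }

/-- The complete `k`-uniform hypergraph on `N` vertices. -/
def completeHG (k N : ℕ) : KHypergraph k where
  verts := Finset.range N
  edges := Finset.powersetCard k (Finset.range N)
  card_eq := fun _ he => (Finset.mem_powersetCard.mp he).2
  subset_verts := fun _ he => (Finset.mem_powersetCard.mp he).1

/-- The Ramsey number `R(G)`: the least `N` with `K_N^(k) → G`. -/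
noncomputable def ramsey {k : ℕ} (G : KHypergraph k) : ℕ :=
  sInf { N | (completeHG k N).Arrows G }

end KHypergraph

/-- `IsLTree k ℓ T` : `T` is a `k`-uniform `ℓ`-tree, i.e. its edges can be ordered
`e₀, …, e_{m−1}` so that each later edge meets the union of the previous ones in at
most `ℓ` vertices, all of which lie in a single previous edge; the vertex set is
the union of the edges. -/
def IsLTree (k ℓ : ℕ) (T : KHypergraph k) : Prop :=
  T.verts = T.edges.biUnion id ∧
  ∃ (m : ℕ) (e : Fin m → Finset ℕ),
    Function.Injective e ∧
    T.edges = Finset.image e Finset.univ ∧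
    ∀ j : Fin m, 0 < (j : ℕ) →
      (e j ∩ (Finset.univ.filter fun i => i < j).biUnion e).card ≤ ℓ ∧
      ∃ i : Fin m, i < j ∧ e j ∩ (Finset.univ.filter fun i => i < j).biUnion e ⊆ e i

/-- Let `1 ≤ ℓ < k` and `n ≥ k`. Let `F` be a `k`-graph with at least
one edge in which every `(ℓ+1)`-set lies in at most one edge, and every `ℓ`-set lying
in some edge lies in at least `n` edges. Then `F` contains a copy of every `k`-uniform
`ℓ`-tree on at most `n` vertices. -/
lemma lemL (k ℓ n : ℕ) (F : KHypergraph k)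
    (hlin : ∀ S : Finset ℕ, S.card = ℓ + 1 → (F.edges.filter fun e => S ⊆ e).card ≤ 1)
    (hdeg : ∀ S : Finset ℕ, S.card = ℓ → (∃ e ∈ F.edges, S ⊆ e) →
      n ≤ (F.edges.filter fun e => S ⊆ e).card)
    (A E₀ W : Finset ℕ) (hE₀ : E₀ ∈ F.edges) (hAE : A ⊆ E₀) (hA : A.card = ℓ)
    (hW : (W \ A).card < n) :
    ∃ E ∈ F.edges, A ⊆ E ∧ E ∩ W ⊆ A := by
  set D := F.edges.filter fun E => A ⊆ E with hD
  have hDn : n ≤ D.card := hdeg A hA ⟨E₀, hE₀, hAE⟩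
  by_contra hcon
  push_neg at hcon
  have hbad : D ⊆ (W \ A).biUnion fun w => D.filter fun E => w ∈ E := by
    intro E hE
    have hEedges : E ∈ F.edges := (Finset.mem_filter.mp hE).1
    have hAE' : A ⊆ E := (Finset.mem_filter.mp hE).2
    obtain ⟨w, hw, hwA⟩ := Finset.not_subset.mp (hcon E hEedges hAE')
    exact Finset.mem_biUnion.mpr ⟨w, Finset.mem_sdiff.mpr ⟨(Finset.mem_inter.mp hw).2, hwA⟩,
      Finset.mem_filter.mpr ⟨hE, (Finset.mem_inter.mp hw).1⟩⟩
  have hone : ∀ w ∈ W \ A, (D.filter fun E => w ∈ E).card ≤ 1 := by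
    intro w hw
    have hwA : w ∉ A := (Finset.mem_sdiff.mp hw).2
    have h1 : (D.filter fun E => w ∈ E) ⊆ F.edges.filter fun E => insert w A ⊆ E := by
      intro E hE
      simp only [hD, Finset.mem_filter] at hE ⊢
      exact ⟨hE.1.1, Finset.insert_subset hE.2 hE.1.2⟩
    exact le_trans (Finset.card_le_card h1)
      (hlin _ (by rw [Finset.card_insert_of_notMem hwA, hA]))
  have hcount : D.card ≤ (W \ A).card := by
    calc D.card ≤ ((W \ A).biUnion fun w => D.filter fun E => w ∈ E).card :=
          Finset.card_le_card hbad
      _ ≤ ∑ w ∈ W \ A, (D.filter fun E => w ∈ E).card := Finset.card_biUnion_le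
      _ ≤ ∑ _w ∈ W \ A, 1 := Finset.sum_le_sum hone
      _ = (W \ A).card := by simp
  omega

lemma lemM (k ℓ n : ℕ) (h1 : 1 ≤ ℓ) (h2 : ℓ < k) (F : KHypergraph k)
    (hlin : ∀ S : Finset ℕ, S.card = ℓ + 1 → (F.edges.filter fun e => S ⊆ e).card ≤ 1)
    (hdeg : ∀ S : Finset ℕ, S.card = ℓ → (∃ e ∈ F.edges, S ⊆ e) →
      n ≤ (F.edges.filter fun e => S ⊆ e).card) :
    ∀ d A E₀ U, E₀ ∈ F.edges → A ⊆ E₀ → A ⊆ U → A.card + d = ℓ →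
      U.card + d + k ≤ n + ℓ → ∃ E ∈ F.edges, A ⊆ E ∧ E ∩ U ⊆ A := by
  intro d
  induction d with
  | zero =>
    intro A E₀ U hE₀ hAE hAU hAcard hUle
    have h : (U \ A).card ≤ U.card := Finset.card_le_card Finset.sdiff_subset
    exact lemL k ℓ n F hlin hdeg A E₀ U hE₀ hAE (by omega) (by omega)
  | succ d ih =>
    intro A E₀ U hE₀ hAE hAU hAcard hUle
    have hE₀card : E₀.card = k := F.card_eq E₀ hE₀
    have hE₀A : (E₀ \ A).card = k - A.card := by rw [Finset.card_sdiff_of_subset hAE, hE₀card]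
    obtain ⟨B₀, hB₀sub, hB₀card⟩ := Finset.exists_subset_card_eq
      (show d + 1 ≤ (E₀ \ A).card by omega)
    set A₁ := A ∪ B₀ with hA₁
    have hA₁E : A₁ ⊆ E₀ := Finset.union_subset hAE (hB₀sub.trans Finset.sdiff_subset)
    have hdisj : Disjoint A B₀ := by
      apply Finset.disjoint_left.mpr
      intro x hx hxB
      exact (Finset.mem_sdiff.mp (hB₀sub hxB)).2 hx
    have hA₁card : A₁.card = ℓ := by
      rw [hA₁, Finset.card_union_of_disjoint hdisj, hB₀card]; omega
    have hWcard : ((U ∪ E₀) \ A₁).card < n := by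
      have hsub : (U ∪ E₀) \ A₁ ⊆ (U \ A) ∪ (E₀ \ A₁) := by
        intro x hx
        obtain ⟨hx1, hx2⟩ := Finset.mem_sdiff.mp hx
        rcases Finset.mem_union.mp hx1 with h | h
        · exact Finset.mem_union_left _ (Finset.mem_sdiff.mpr
            ⟨h, fun hxA => hx2 (Finset.mem_union_left _ hxA)⟩)
        · exact Finset.mem_union_right _ (Finset.mem_sdiff.mpr ⟨h, hx2⟩)
      have h1' : (U \ A).card = U.card - A.card := by rw [Finset.card_sdiff_of_subset hAU]
      have h2' : (E₀ \ A₁).card = k - ℓ := by rw [Finset.card_sdiff_of_subset hA₁E, hE₀card, hA₁card]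
      have h3' : ((U \ A) ∪ (E₀ \ A₁)).card ≤ (U \ A).card + (E₀ \ A₁).card :=
        Finset.card_union_le _ _
      have h4' := Finset.card_le_card hsub
      have h5' : A.card ≤ U.card := Finset.card_le_card hAU
      omega
    obtain ⟨E₁, hE₁, hA₁E₁, hE₁W⟩ := lemL k ℓ n F hlin hdeg A₁ E₀ (U ∪ E₀) hE₀ hA₁E hA₁card hWcard
    have hE₁card : E₁.card = k := F.card_eq E₁ hE₁
    have hx : (E₁ \ A₁).Nonempty := by
      rw [← Finset.card_pos, Finset.card_sdiff_of_subset hA₁E₁, hE₁card, hA₁card]; omega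
    obtain ⟨x, hxmem⟩ := hx
    obtain ⟨hxE₁, hxA₁⟩ := Finset.mem_sdiff.mp hxmem
    have hxU : x ∉ U := fun hxU =>
      hxA₁ (hE₁W (Finset.mem_inter.mpr ⟨hxE₁, Finset.mem_union_left _ hxU⟩))
    have hxA : x ∉ A := fun hxA => hxA₁ (Finset.mem_union_left _ hxA)
    obtain ⟨E, hE, hAE', hEU'⟩ := ih (insert x A) E₁ (insert x U) hE₁
      (Finset.insert_subset hxE₁ ((Finset.subset_union_left).trans hA₁E₁))
      (Finset.insert_subset_insert _ hAU |>.trans (by intro y hy; exact hy) |> fun h => h)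
      (by rw [Finset.card_insert_of_notMem hxA]; omega)
      (by have := Finset.card_insert_le x U; omega)
    refine ⟨E, hE, (Finset.subset_insert x A).trans hAE', ?_⟩
    intro y hy
    obtain ⟨hyE, hyU⟩ := Finset.mem_inter.mp hy
    have : y ∈ insert x A := hEU' (Finset.mem_inter.mpr ⟨hyE, Finset.mem_insert_of_mem hyU⟩)
    rcases Finset.mem_insert.mp this with h | h
    · exact absurd (h ▸ hyU) hxU
    · exact h

theorem stmt9 (k ℓ n : ℕ) (h1 : 1 ≤ ℓ) (h2 : ℓ < k) (hn : k ≤ n)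
    (F : KHypergraph k) (hne : F.edges.Nonempty)
    (hlin : ∀ S : Finset ℕ, S.card = ℓ + 1 → (F.edges.filter fun e => S ⊆ e).card ≤ 1)
    (hdeg : ∀ S : Finset ℕ, S.card = ℓ → (∃ e ∈ F.edges, S ⊆ e) →
      n ≤ (F.edges.filter fun e => S ⊆ e).card) :
    ∀ T : KHypergraph k, IsLTree k ℓ T → T.verts.card ≤ n →
      ∃ f : ℕ → ℕ, F.IsCopy T f := by
  rintro T ⟨hTv, m, e, einj, hTe, htree⟩ hTn
  have heT : ∀ i : Fin m, e i ∈ T.edges := fun i =>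
    hTe ▸ Finset.mem_image_of_mem e (Finset.mem_univ i)
  have hek : ∀ i : Fin m, (e i).card = k := fun i => T.card_eq _ (heT i)
  have heV : ∀ i : Fin m, e i ⊆ T.verts := by
    intro i v hv
    rw [hTv]
    exact Finset.mem_biUnion.mpr ⟨e i, heT i, hv⟩
  have key : ∀ j, j ≤ m → ∃ f : ℕ → ℕ,
      Set.InjOn f ((Finset.univ.filter fun i : Fin m => (i : ℕ) < j).biUnion e : Finset ℕ) ∧
      ∀ i : Fin m, (i : ℕ) < j → (e i).image f ∈ F.edges := by
    intro j
    induction j with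
    | zero =>
      intro _
      refine ⟨id, ?_, fun i hi => absurd hi (by omega)⟩
      have : (Finset.univ.filter fun i : Fin m => (i : ℕ) < 0) = ∅ := by
        apply Finset.filter_false_of_mem; intro i _; omega
      rw [this]
      simp [Set.InjOn]
    | succ j ih =>
      intro hjm
      obtain ⟨f, hfinj, hfe⟩ := ih (Nat.le_of_succ_le hjm)
      set Vj := ((Finset.univ.filter fun i : Fin m => (i : ℕ) < j).biUnion e : Finset ℕ) with hVj
      have hjm' : j < m := hjm
      set J : Fin m := ⟨j, hjm'⟩ with hJ
      set S := e J ∩ Vj with hS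
      set A := S.image f with hA
      set U := Vj.image f with hU
      have hSV : S ⊆ Vj := Finset.inter_subset_right
      have hSe : S ⊆ e J := Finset.inter_subset_left
      have hAU : A ⊆ U := Finset.image_subset_image hSV
      have hAcard : A.card = S.card :=
        Finset.card_image_of_injOn (hfinj.mono (Finset.coe_subset.mpr hSV))
      have hUcard : U.card = Vj.card := Finset.card_image_of_injOn hfinj
      have hmain : S.card ≤ ℓ ∧ ∃ E₀ ∈ F.edges, A ⊆ E₀ := by
        rcases Nat.eq_zero_or_pos j with h0 | hpos
        · have hVempty : Vj = ∅ := by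
            apply Finset.eq_empty_of_forall_notMem
            intro v hv
            obtain ⟨i, hi, _⟩ := Finset.mem_biUnion.mp hv
            have := (Finset.mem_filter.mp hi).2
            omega
          have hSempty : S = ∅ := by rw [hS, hVempty, Finset.inter_empty]
          obtain ⟨E₀, hE₀⟩ := hne
          refine ⟨by simp [hSempty], E₀, hE₀, ?_⟩
          rw [hA, hSempty, Finset.image_empty]
          exact Finset.empty_subset _
        · have hfilter : (Finset.univ.filter fun i : Fin m => i < J)
              = Finset.univ.filter fun i : Fin m => (i : ℕ) < j := by
            apply Finset.filter_congr; intro i _; exact Fin.lt_def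
          obtain ⟨hc, i₀, hi₀, hsub⟩ := htree J (by simpa [hJ])
          rw [hfilter] at hc hsub
          exact ⟨hc, (e i₀).image f, hfe i₀ (by exact Fin.lt_def.mp hi₀),
            Finset.image_subset_image hsub⟩
      obtain ⟨hScard, E₀, hE₀, hAE₀⟩ := hmain
      -- cardinality bound : Vj.card + k ≤ n + S.card
      have hcards : Vj.card + k ≤ n + S.card := by
        have hsub : Vj ∪ e J ⊆ T.verts := by
          apply Finset.union_subset _ (heV J)
          intro v hv
          obtain ⟨i, _, hvi⟩ := Finset.mem_biUnion.mp hv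
          exact heV i hvi
        have h5 := Finset.card_union_add_card_inter Vj (e J)
        have h6 : Vj ∩ e J = S := by rw [hS, Finset.inter_comm]
        have h7 : (Vj ∪ e J).card ≤ n := le_trans (Finset.card_le_card hsub) hTn
        rw [h6, hek J] at h5
        omega
      obtain ⟨E, hE, hAE, hEU⟩ := lemM k ℓ n h1 h2 F hlin hdeg (ℓ - A.card) A E₀ U hE₀ hAE₀ hAU
        (by omega) (by omega)
      have hEcard : E.card = k := F.card_eq E hE
      have hcard_eq : (e J \ S).card = (E \ A).card := by
        rw [Finset.card_sdiff_of_subset hSe, Finset.card_sdiff_of_subset hAE, hek J, hEcard, hAcard]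
      set g := Finset.equivOfCardEq hcard_eq with hg
      set f' : ℕ → ℕ := fun v => if h : v ∈ e J \ S then (g ⟨v, h⟩ : ℕ) else f v with hf'
      have hold : ∀ v ∈ Vj, f' v = f v := by
        intro v hv
        have hns : v ∉ e J \ S := fun hmem =>
          (Finset.mem_sdiff.mp hmem).2 (Finset.mem_inter.mpr ⟨(Finset.mem_sdiff.mp hmem).1, hv⟩)
        simp only [hf']
        exact dif_neg hns
      have hfresh : ∀ v (h : v ∈ e J \ S), f' v = (g ⟨v, h⟩ : ℕ) := by
        intro v h
        simp only [hf']
        exact dif_pos h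
      have hfreshmem : ∀ v ∈ e J \ S, f' v ∈ E \ A := by
        intro v h
        rw [hfresh v h]
        exact (g ⟨v, h⟩).2
      have himg : Finset.image f' (e J \ S) = E \ A := by
        apply Finset.eq_of_subset_of_card_le
        · intro y hy
          obtain ⟨v, hv, rfl⟩ := Finset.mem_image.mp hy
          exact hfreshmem v hv
        · have hinj : Set.InjOn f' ↑(e J \ S) := by
            intro a ha b hb hab
            rw [Finset.mem_coe] at ha hb
            rw [hfresh a ha, hfresh b hb] at hab
            have := g.injective (Subtype.ext hab)
            exact congrArg Subtype.val this
          rw [Finset.card_image_of_injOn hinj, hcard_eq]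
      have hfreshU : ∀ y ∈ E \ A, y ∉ U := by
        intro y hy hyU
        exact (Finset.mem_sdiff.mp hy).2 (hEU (Finset.mem_inter.mpr ⟨(Finset.mem_sdiff.mp hy).1, hyU⟩))
      have hVsucc : ((Finset.univ.filter fun i : Fin m => (i : ℕ) < j + 1).biUnion e : Finset ℕ)
          = Vj ∪ e J := by
        ext v
        constructor
        · intro hv
          obtain ⟨i, hi, hvi⟩ := Finset.mem_biUnion.mp hv
          have hij : (i : ℕ) < j + 1 := (Finset.mem_filter.mp hi).2
          rcases Nat.lt_succ_iff_lt_or_eq.mp hij with h | h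
          · exact Finset.mem_union_left _ (Finset.mem_biUnion.mpr
              ⟨i, Finset.mem_filter.mpr ⟨Finset.mem_univ i, h⟩, hvi⟩)
          · exact Finset.mem_union_right _ (by rwa [show i = J from Fin.ext h] at hvi)
        · intro hv
          rcases Finset.mem_union.mp hv with h | h
          · obtain ⟨i, hi, hvi⟩ := Finset.mem_biUnion.mp h
            exact Finset.mem_biUnion.mpr ⟨i, Finset.mem_filter.mpr
              ⟨Finset.mem_univ i, Nat.lt_succ_of_lt (Finset.mem_filter.mp hi).2⟩, hvi⟩
          · exact Finset.mem_biUnion.mpr ⟨J, Finset.mem_filter.mpr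
              ⟨Finset.mem_univ J, Nat.lt_succ_self j⟩, h⟩
      refine ⟨f', ?_, ?_⟩
      · rw [hVsucc]
        intro a ha b hb hab
        rw [Finset.coe_union, Set.mem_union] at ha hb
        have hcases : ∀ x, x ∈ (Vj : Set ℕ) ∨ x ∈ (e J : Finset ℕ) → x ∈ Vj ∨ x ∈ e J \ S := by
          intro x hx
          rcases hx with h | h
          · exact Or.inl h
          · by_cases hxS : x ∈ S
            · exact Or.inl (hSV hxS)
            · exact Or.inr (Finset.mem_sdiff.mpr ⟨h, hxS⟩)
        rcases hcases a ha with ha' | ha' <;> rcases hcases b hb with hb' | hb'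
        · rw [hold a ha', hold b hb'] at hab
          exact hfinj ha' hb' hab
        · exfalso
          rw [hold a ha'] at hab
          exact hfreshU _ (hfreshmem b hb') (hab ▸ Finset.mem_image_of_mem f ha')
        · exfalso
          rw [hold b hb'] at hab
          exact hfreshU _ (hfreshmem a ha') (hab ▸ Finset.mem_image_of_mem f hb')
        · rw [hfresh a ha', hfresh b hb'] at hab
          exact congrArg Subtype.val (g.injective (Subtype.ext hab))
      · intro i hi
        rcases Nat.lt_succ_iff_lt_or_eq.mp hi with h | h
        · have hsubV : e i ⊆ Vj := by
            intro v hv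
            exact Finset.mem_biUnion.mpr ⟨i, Finset.mem_filter.mpr ⟨Finset.mem_univ i, h⟩, hv⟩
          have : Finset.image f' (e i) = Finset.image f (e i) :=
            Finset.image_congr fun v hv => hold v (hsubV hv)
          rw [this]
          exact hfe i h
        · have hiJ : i = J := Fin.ext h
          rw [hiJ]
          have hsplit : e J = S ∪ (e J \ S) := (Finset.union_sdiff_of_subset hSe).symm
          rw [hsplit, Finset.image_union, himg]
          have : Finset.image f' S = A :=
            (Finset.image_congr fun v hv => hold v (hSV hv)) |>.trans rfl
          rw [this, Finset.union_sdiff_of_subset hAE]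
          exact hE
  obtain ⟨f, hfinj, hfe⟩ := key m le_rfl
  have hfilterall : (Finset.univ.filter fun i : Fin m => (i : ℕ) < m) = Finset.univ := by
    apply Finset.filter_true_of_mem; intro i _; exact i.isLt
  have hVm : ((Finset.univ.filter fun i : Fin m => (i : ℕ) < m).biUnion e : Finset ℕ) = T.verts := by
    rw [hfilterall, hTv, hTe, Finset.image_biUnion]
    rfl
  refine ⟨f, ?_, ?_, ?_⟩
  · rw [← hVm]; exact hfinj
  · intro v hv
    rw [Finset.mem_coe, hTv] at hv
    obtain ⟨e', he', hve'⟩ := Finset.mem_biUnion.mp hv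
    rw [hTe] at he'
    obtain ⟨i, _, rfl⟩ := Finset.mem_image.mp he'
    exact F.subset_verts _ (hfe i i.isLt) (Finset.mem_image_of_mem f hve')
  · intro e' he'
    rw [hTe] at he'
    obtain ⟨i, _, rfl⟩ := Finset.mem_image.mp he'
    exact hfe i i.isLt
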